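/- Let M ∈ GL₃(F_{p^m}) satisfy M Mᵗ = c I₃ for some nonzero scalar c ∈ F_{p^m}, and let ψ: Rⁿ → F_{p^m}^{3n} be the associated Gray map. If C ⊆ Rⁿ is a linear code with C^⊥ ⊆ C, then ψ(C)^⊥ ⊆ ψ(C) in F_{p^m}^{3n}. -/
import Mathlib

open Polynomial

set_option synthInstance.maxHeartbeats 1000000
set_option maxHeartbeats 1000000

noncomputable section

/-- The ring `R = F[v]/⟨v^3 - v⟩`. -/
abbrev Rq (F : Type) [Field F] : Type :=
  Polynomial F ⧸ Ideal.span {(X : Polynomial F) ^ 3 - X}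

/-- The image of `v` in `R`. -/
def vR (F : Type) [Field F] : Rq F := Ideal.Quotient.mk _ X

/-- The orthogonal idempotents `η₀ = 1 - v²`, `η₁ = ζ(v² + v)`, `η₂ = ζ(v² - v)`
with `ζ = 2⁻¹`. -/
def eta (F : Type) [Field F] : Fin 3 → Rq F :=
  ![1 - vR F ^ 2,
    algebraMap F (Rq F) (2 : F)⁻¹ * (vR F ^ 2 + vR F),
    algebraMap F (Rq F) (2 : F)⁻¹ * (vR F ^ 2 - vR F)]

/-- The Euclidean dual of a code, with respect to the standard bilinear form. -/
def dualSet {ι S : Type} [Fintype ι] [CommRing S] (C : Set (ι → S)) : Set (ι → S) :=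
  {a | ∀ b ∈ C, ∑ t, a t * b t = 0}

lemma v3 (F : Type) [Field F] : vR F ^ 3 = vR F := by
  have h : (Ideal.Quotient.mk (Ideal.span {(X : Polynomial F) ^ 3 - X})) ((X:Polynomial F)^3 - X) = 0 := by
    rw [Ideal.Quotient.eq_zero_iff_mem]; exact Ideal.subset_span rfl
  rw [map_sub, map_pow, sub_eq_zero] at h
  exact h

lemma hzeta (F : Type) [Field F] (h2 : (2:F) ≠ 0) :
    (algebraMap F (Rq F)) (2:F)⁻¹ * 2 = 1 := by
  rw [show ((2:Rq F)) = algebraMap F (Rq F) 2 from (map_ofNat _ 2).symm, ← map_mul,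
    inv_mul_cancel₀ h2, map_one]

lemma eta_mul (F : Type) [Field F] (h2 : (2:F) ≠ 0) (i j : Fin 3) :
    eta F i * eta F j = if i = j then eta F i else 0 := by
  have hv : vR F ^ 3 = vR F := v3 F
  have hz : (algebraMap F (Rq F)) (2:F)⁻¹ * 2 = 1 := hzeta F h2
  fin_cases i <;> fin_cases j <;>
    simp only [_root_.eta, Matrix.cons_val_zero, Matrix.cons_val_one, Matrix.head_cons,
      Matrix.cons_val_two, Matrix.tail_cons, Fin.mk.injEq, Fin.isValue, reduceIte,
      Fin.zero_eta, Fin.mk_one, Fin.reduceFinMk,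
      if_true, if_false, Nat.reduceEqDiff, OfNat.ofNat_ne_zero, OfNat.ofNat_ne_one,
      Nat.zero_ne_one, Nat.one_ne_zero, ite_true, ite_false]
  · linear_combination (vR F) * hv
  · rw [if_neg (by decide)]; linear_combination (-((algebraMap F (Rq F)) (2:F)⁻¹ * vR F) - (algebraMap F (Rq F)) (2:F)⁻¹) * hv
  · rw [if_neg (by decide)]; linear_combination (-((algebraMap F (Rq F)) (2:F)⁻¹ * vR F) + (algebraMap F (Rq F)) (2:F)⁻¹) * hv
  · rw [if_neg (by decide)]; linear_combination (-((algebraMap F (Rq F)) (2:F)⁻¹ * vR F) - (algebraMap F (Rq F)) (2:F)⁻¹) * hv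
  · linear_combination ((algebraMap F (Rq F)) (2:F)⁻¹ ^ 2 * vR F + 2 * (algebraMap F (Rq F)) (2:F)⁻¹ ^ 2) * hv
      + (algebraMap F (Rq F)) (2:F)⁻¹ * (vR F ^ 2 + vR F) * hz
  · rw [if_neg (by decide)]; linear_combination (algebraMap F (Rq F)) (2:F)⁻¹ ^ 2 * vR F * hv
  · rw [if_neg (by decide)]; linear_combination (-((algebraMap F (Rq F)) (2:F)⁻¹ * vR F) + (algebraMap F (Rq F)) (2:F)⁻¹) * hv
  · rw [if_neg (by decide)]; linear_combination (algebraMap F (Rq F)) (2:F)⁻¹ ^ 2 * vR F * hv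
  · linear_combination ((algebraMap F (Rq F)) (2:F)⁻¹ ^ 2 * vR F - 2 * (algebraMap F (Rq F)) (2:F)⁻¹ ^ 2) * hv
      + (algebraMap F (Rq F)) (2:F)⁻¹ * (vR F ^ 2 - vR F) * hz

lemma exists_repr (F : Type) [Field F] (h2 : (2:F) ≠ 0) (r : Rq F) :
    ∃ β : Fin 3 → F, r = ∑ i, algebraMap F (Rq F) (β i) * eta F i := by
  have hz : (algebraMap F (Rq F)) (2:F)⁻¹ * 2 = 1 := hzeta F h2
  set S := Submodule.span F (Set.range (eta F)) with hS
  have h0 : eta F 0 ∈ S := Submodule.subset_span ⟨0, rfl⟩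
  have h1 : eta F 1 ∈ S := Submodule.subset_span ⟨1, rfl⟩
  have h2' : eta F 2 ∈ S := Submodule.subset_span ⟨2, rfl⟩
  have e1 : (1 : Rq F) = eta F 0 + eta F 1 + eta F 2 := by
    simp only [_root_.eta, Matrix.cons_val_zero, Matrix.cons_val_one, Matrix.head_cons,
      Matrix.cons_val_two, Matrix.tail_cons]
    linear_combination (-(vR F ^ 2)) * hz
  have ev : vR F = eta F 1 - eta F 2 := by
    simp only [_root_.eta, Matrix.cons_val_zero, Matrix.cons_val_one, Matrix.head_cons,
      Matrix.cons_val_two, Matrix.tail_cons]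
    linear_combination (-(vR F)) * hz
  have ev2 : vR F ^ 2 = eta F 1 + eta F 2 := by
    simp only [_root_.eta, Matrix.cons_val_zero, Matrix.cons_val_one, Matrix.head_cons,
      Matrix.cons_val_two, Matrix.tail_cons]
    linear_combination (-(vR F ^ 2)) * hz
  have m1 : (1 : Rq F) ∈ S := by rw [e1]; exact add_mem (add_mem h0 h1) h2'
  have mv : vR F ∈ S := by rw [ev]; exact sub_mem h1 h2'
  have mv2 : vR F ^ 2 ∈ S := by rw [ev2]; exact add_mem h1 h2'
  have mpow : ∀ k : ℕ, vR F ^ k ∈ S := by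
    have key : ∀ k : ℕ, vR F ^ k ∈ S ∧ vR F ^ (k+1) ∈ S ∧ vR F ^ (k+2) ∈ S := by
      intro k
      induction k with
      | zero => exact ⟨by simpa using m1, by simpa using mv, mv2⟩
      | succ k ih =>
        refine ⟨ih.2.1, ih.2.2, ?_⟩
        have : vR F ^ (k + 1 + 2) = vR F ^ (k + 1) := by
          rw [show k + 1 + 2 = k + 3 from rfl, pow_add, v3 F, ← pow_succ]
        rw [this]; exact ih.2.1
    exact fun k => (key k).1
  have hr : r ∈ S := by
    obtain ⟨f, rfl⟩ := Ideal.Quotient.mk_surjective r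
    have hrepr : (Ideal.Quotient.mk (Ideal.span {(X : Polynomial F) ^ 3 - X})) f =
        ∑ i ∈ Finset.range (f.natDegree + 1), (f.coeff i) • vR F ^ i := by
      conv_lhs => rw [f.as_sum_range' (f.natDegree + 1) (lt_add_one _)]
      rw [map_sum]
      refine Finset.sum_congr rfl fun i _ => ?_
      rw [← Polynomial.C_mul_X_pow_eq_monomial, map_mul, map_pow]
      have hC : (Ideal.Quotient.mk (Ideal.span {(X : Polynomial F) ^ 3 - X})) (C (f.coeff i))
          = algebraMap F (Rq F) (f.coeff i) := rfl
      rw [hC]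
      exact (Algebra.smul_def _ _).symm
    rw [hrepr]
    exact Submodule.sum_mem _ fun i _ => Submodule.smul_mem _ _ (mpow i)
  obtain ⟨β, hβ⟩ := (Submodule.mem_span_range_iff_exists_fun F).mp hr
  refine ⟨β, ?_⟩
  rw [← hβ]
  refine Finset.sum_congr rfl fun i _ => ?_
  with_unfolding_all exact Algebra.smul_def (R := F) (A := Rq F) (β i) (_root_.eta F i)

lemma two_ne (p m : ℕ) (hp : p.Prime) (hodd : Odd p) (hm : 0 < m)
    (F : Type) [Field F] [Fintype F] (hF : Fintype.card F = p ^ m) : (2:F) ≠ 0 := by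
  intro h20
  obtain ⟨q, hcq⟩ := CharP.exists F
  obtain ⟨nn, hq, hcard⟩ := @FiniteField.card F _ _ q hcq
  have hqp : q = p := by
    have : q ∣ p ^ m := by
      rw [← hF, hcard]
      exact dvd_pow_self q nn.2.ne'
    exact ((Nat.prime_dvd_prime_iff_eq hq hp).mp (hq.dvd_of_dvd_pow this))
  have hdvd : q ∣ 2 := by
    have : ((2:ℕ) : F) = 0 := by exact_mod_cast h20
    exact (CharP.cast_eq_zero_iff F q 2).mp this
  have hq2 : q = 2 := ((Nat.prime_dvd_prime_iff_eq hq Nat.prime_two).mp hdvd)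
  rw [hqp] at hq2
  rw [hq2] at hodd
  exact (Nat.not_odd_iff_even.mpr (even_iff_two_dvd.mpr dvd_rfl)) hodd

lemma MtM (F : Type) [Field F] (M : Matrix (Fin 3) (Fin 3) F) (c : F) (hc : c ≠ 0)
    (hMMt : M * M.transpose = c • 1) : M.transpose * M = c • 1 := by
  have h1 : M * (c⁻¹ • M.transpose) = 1 := by
    rw [Matrix.mul_smul, hMMt, smul_smul, inv_mul_cancel₀ hc, one_smul]
  have h2 : (c⁻¹ • M.transpose) * M = 1 := mul_eq_one_comm.mp h1
  calc M.transpose * M = c • ((c⁻¹ • M.transpose) * M) := by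
        rw [Matrix.smul_mul, smul_smul, mul_inv_cancel₀ hc, one_smul]
    _ = c • 1 := by rw [h2]

theorem stmt19 (p m n : ℕ) (hp : p.Prime) (hodd : Odd p) (hm : 0 < m)
    (F : Type) [Field F] [Fintype F] (hF : Fintype.card F = p ^ m)
    (M : Matrix (Fin 3) (Fin 3) F) (c : F) (hc : c ≠ 0)
    (hMMt : M * M.transpose = c • 1)
    (ψ : (Fin n → Rq F) →ₗ[F] (Fin n × Fin 3 → F))
    (hψ : ∀ (x : Fin n → Rq F) (β : Fin n → Fin 3 → F),
      (∀ t, x t = ∑ i, algebraMap F (Rq F) (β t i) * eta F i) →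
      ∀ t i, ψ x (t, i) = ∑ j, β t j * M j i)
    (C : Submodule (Rq F) (Fin n → Rq F))
    (hdual : dualSet (C : Set (Fin n → Rq F)) ⊆ (C : Set (Fin n → Rq F))) :
    dualSet (⇑ψ '' (C : Set (Fin n → Rq F))) ⊆ ⇑ψ '' (C : Set (Fin n → Rq F)) := by
  have h2 : (2:F) ≠ 0 := two_ne p m hp hodd hm F hF
  have hMtM : M.transpose * M = c • 1 := MtM F M c hc hMMt
  have hMtM' : ∀ j i : Fin 3, (∑ k, M k j * M k i) = c * (if j = i then 1 else 0) := by
    intro j i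
    have h := congrFun (congrFun hMtM j) i
    simpa [Matrix.mul_apply, Matrix.transpose_apply, Matrix.one_apply] using h
  intro a ha
  set β : Fin n → Fin 3 → F := fun t k => c⁻¹ * ∑ i, a (t, i) * M k i with hβdef
  set x : Fin n → Rq F := fun t => ∑ i, algebraMap F (Rq F) (β t i) * eta F i with hxdef
  have hψx : ∀ t i, ψ x (t, i) = ∑ j, β t j * M j i := hψ x β (fun t => rfl)
  -- ψ x = a
  have hψxa : ψ x = a := by
    funext ti
    obtain ⟨t, i⟩ := ti
    rw [hψx t i]
    have step : ∀ k : Fin 3, β t k * M k i = ∑ j, c⁻¹ * (a (t, j) * (M k j * M k i)) := by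
      intro k
      show (c⁻¹ * ∑ j, a (t, j) * M k j) * M k i = _
      rw [Finset.mul_sum, Finset.sum_mul]
      exact Finset.sum_congr rfl fun j _ => by ring
    rw [Finset.sum_congr rfl fun k _ => step k, Finset.sum_comm]
    have : ∀ j : Fin 3, (∑ k, c⁻¹ * (a (t, j) * (M k j * M k i)))
        = c⁻¹ * (a (t, j) * (c * (if j = i then 1 else 0))) := by
      intro j
      rw [← Finset.mul_sum, ← Finset.mul_sum, ← hMtM' j i]
    rw [Finset.sum_congr rfl fun j _ => this j]
    simp only [mul_ite, mul_one, mul_zero]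
    rw [Finset.sum_ite_eq' Finset.univ i (fun j => c⁻¹ * (a (t, j) * c))]
    simp only [Finset.mem_univ, if_true]
    field_simp
  -- x ∈ dualSet C
  have hxdual : x ∈ dualSet (C : Set (Fin n → Rq F)) := by
    intro y hy
    choose δ hδ using fun t => exists_repr F h2 (y t)
    have hkey : ∀ j : Fin 3, (∑ t, β t j * δ t j) = 0 := by
      intro j
      have hyC : eta F j • y ∈ (C : Set (Fin n → Rq F)) := C.smul_mem (eta F j) hy
      have hrep : ∀ t, (eta F j • y) t = ∑ i, algebraMap F (Rq F)
          ((fun t i => if i = j then δ t j else 0) t i) * eta F i := by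
        intro t
        have : (eta F j • y) t = eta F j * y t := rfl
        rw [this, hδ t, Finset.mul_sum]
        refine Finset.sum_congr rfl fun i _ => ?_
        by_cases hij : i = j
        · subst hij
          simp only [if_pos rfl]
          rw [mul_left_comm, eta_mul F h2 i i, if_pos rfl]
          norm_num
        · simp only [if_neg hij, map_zero, zero_mul]
          rw [mul_left_comm, eta_mul F h2 j i, if_neg (fun hh => hij hh.symm), mul_zero]
      have hψy := hψ (eta F j • y) _ hrep
      have hzero := ha (ψ (eta F j • y)) ⟨_, hyC, rfl⟩
      rw [Fintype.sum_prod_type] at hzero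
      have hψy' : ∀ t i, ψ (eta F j • y) (t, i) = δ t j * M j i := by
        intro t i
        rw [hψy t i]
        simp only [ite_mul, zero_mul]
        rw [Finset.sum_ite_eq' Finset.univ j (fun k => δ t j * M k i)]
        simp
      have hz2 : (∑ t, ∑ i, a (t, i) * (δ t j * M j i)) = 0 := by
        rw [← hzero]
        exact Finset.sum_congr rfl fun t _ => Finset.sum_congr rfl fun i _ => by rw [hψy' t i]
      have : (∑ t, β t j * δ t j) = c⁻¹ * ∑ t, ∑ i, a (t, i) * (δ t j * M j i) := by
        rw [Finset.mul_sum]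
        refine Finset.sum_congr rfl fun t _ => ?_
        calc β t j * δ t j = ∑ i, c⁻¹ * (a (t, i) * (δ t j * M j i)) := by
              show (c⁻¹ * ∑ i, a (t, i) * M j i) * δ t j = _
              rw [Finset.mul_sum, Finset.sum_mul]
              exact Finset.sum_congr rfl fun i _ => by ring
          _ = c⁻¹ * ∑ i, a (t, i) * (δ t j * M j i) := (Finset.mul_sum _ _ _).symm
      rw [this, hz2, mul_zero]
    -- now compute the R-valued inner product
    have hterm : ∀ t, x t * y t = ∑ j, algebraMap F (Rq F) (β t j * δ t j) * eta F j := by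
      intro t
      have hxt : x t = ∑ i, algebraMap F (Rq F) (β t i) * eta F i := rfl
      rw [hxt, hδ t, Finset.sum_mul_sum]
      refine Finset.sum_congr rfl fun j _ => ?_
      rw [Finset.sum_eq_single j (fun i _ hij => ?_) (fun h => absurd (Finset.mem_univ j) h)]
      · rw [mul_mul_mul_comm, ← map_mul, eta_mul F h2 j j, if_pos rfl]
      · rw [mul_mul_mul_comm, ← map_mul, eta_mul F h2 j i,
          if_neg (fun hh => hij hh.symm), mul_zero]
    rw [Finset.sum_congr rfl fun t _ => hterm t, Finset.sum_comm]
    refine Finset.sum_eq_zero fun j _ => ?_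
    rw [← Finset.sum_mul, ← map_sum, hkey j, map_zero, zero_mul]
  exact ⟨x, hdual hxdual, hψxa⟩
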